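/- Let κ₁, κ₂ : 𝔹^m → 𝔹 be non-constant with κ₁ ⊨ κ₂ and κ₁ ≠ κ₂, and define κ(y, x_n) = κ₂(y) if x_n = 1, κ₁(y) if x_n = 0, on n = m+1 features. For v = (u, 1) with κ₂(u)=0, and for every S ⊆ {1,...,m}, φ(S∪{n}) − φ(S) = 2^{-(m-|S|)-1} (Σ_{y agreeing with u on S} κ₂(y) − Σ_{y agreeing with u on S} κ₁(y)), which is nonnegative; consequently Sv(n) ≥ 0, with Sv(n) > 0 whenever κ₁ and κ₂ differ on some point agreeing with u on some S. -/
import Mathlib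


open Finset

/-- `X` is a weak abductive explanation (weak AXp) for classifier `κ` at point `v`:
every point agreeing with `v` on `X` gets the same prediction as `v`. -/
def weakAXp {n : ℕ} (κ : (Fin n → Bool) → Bool) (v : Fin n → Bool)
    (X : Finset (Fin n)) : Prop :=
  ∀ x : Fin n → Bool, (∀ i ∈ X, x i = v i) → κ x = κ v

/-- `X` is an AXp: a subset-minimal weak AXp. -/
def AXp {n : ℕ} (κ : (Fin n → Bool) → Bool) (v : Fin n → Bool)
    (X : Finset (Fin n)) : Prop :=
  weakAXp κ v X ∧ ∀ X' ⊂ X, ¬ weakAXp κ v X'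

/-- `Y` is a weak contrastive explanation (weak CXp) for `κ` at `v`:
some point agreeing with `v` outside `Y` gets a different prediction. -/
def weakCXp {n : ℕ} (κ : (Fin n → Bool) → Bool) (v : Fin n → Bool)
    (Y : Finset (Fin n)) : Prop :=
  ∃ x : Fin n → Bool, (∀ i ∉ Y, x i = v i) ∧ κ x ≠ κ v

/-- `Y` is a CXp: a subset-minimal weak CXp. -/
def CXp {n : ℕ} (κ : (Fin n → Bool) → Bool) (v : Fin n → Bool)
    (Y : Finset (Fin n)) : Prop :=
  weakCXp κ v Y ∧ ∀ Y' ⊂ Y, ¬ weakCXp κ v Y'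

/-- A feature is relevant if it occurs in some AXp. -/
def Relevant {n : ℕ} (κ : (Fin n → Bool) → Bool) (v : Fin n → Bool) (i : Fin n) : Prop :=
  ∃ X, AXp κ v X ∧ i ∈ X

/-- A feature is irrelevant if it occurs in no AXp. -/
def Irrelevant {n : ℕ} (κ : (Fin n → Bool) → Bool) (v : Fin n → Bool) (i : Fin n) : Prop :=
  ¬ Relevant κ v i

/-- `phi κ v S` : average value of `κ` over points agreeing with `v` on `S`
(uniform distribution). -/
noncomputable def phi {n : ℕ} (κ : (Fin n → Bool) → Bool) (v : Fin n → Bool)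
    (S : Finset (Fin n)) : ℝ :=
  (1 / 2 ^ (n - S.card)) *
    ∑ x ∈ Finset.univ.filter (fun x : Fin n → Bool => ∀ i ∈ S, x i = v i),
      (if κ x then (1 : ℝ) else 0)

/-- Shapley value of feature `i` for classifier `κ` at point `v`. -/
noncomputable def Sv {n : ℕ} (κ : (Fin n → Bool) → Bool) (v : Fin n → Bool)
    (i : Fin n) : ℝ :=
  ∑ S ∈ (Finset.univ.erase i).powerset,
    ((S.card.factorial * (n - S.card - 1).factorial : ℝ) / n.factorial) *
      (phi κ v (insert i S) - phi κ v S)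


def snocEquiv (m : ℕ) : (Fin (m+1) → Bool) ≃ (Fin m → Bool) × Bool where
  toFun x := (Fin.init x, x (Fin.last m))
  invFun p := Fin.snoc p.1 p.2
  left_inv x := Fin.snoc_init_self x
  right_inv p := by simp [Fin.init_snoc, Fin.snoc_last]

lemma sum_split {m : ℕ} (f : (Fin (m+1) → Bool) → ℝ) :
    ∑ x : Fin (m+1) → Bool, f x
      = ∑ y : Fin m → Bool, (f (Fin.snoc y true) + f (Fin.snoc y false)) := by
  rw [← Fintype.sum_equiv (snocEquiv m).symm (fun p => f (Fin.snoc p.1 p.2)) f (fun p => rfl)]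
  rw [Fintype.sum_prod_type]
  exact Finset.sum_congr rfl fun y _ => Fintype.sum_bool _

section main
variable {m : ℕ} (κ₁ κ₂ : (Fin m → Bool) → Bool) (u : Fin m → Bool)
  (κ : (Fin (m + 1) → Bool) → Bool)
  (hκ : ∀ x, κ x = if x (Fin.last m) then κ₂ (fun i => x i.castSucc)
                   else κ₁ (fun i => x i.castSucc))
  (v : Fin (m + 1) → Bool) (hv : v = Fin.snoc u true)

noncomputable def Phi (g : (Fin m → Bool) → Bool) (u : Fin m → Bool) (T : Finset (Fin m)) : ℝ :=
  ∑ y ∈ Finset.univ.filter (fun y : Fin m → Bool => ∀ i ∈ T, y i = u i),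
    (if g y then (1 : ℝ) else 0)

include hκ hv in
lemma phi_insert (T : Finset (Fin m)) :
    phi κ v (insert (Fin.last m) (T.map Fin.castSuccEmb))
      = (1 / 2 ^ (m - T.card)) * Phi κ₂ u T := by
  have hnot : Fin.last m ∉ T.map Fin.castSuccEmb := by
    simp only [Finset.mem_map, Fin.coe_castSuccEmb]
    rintro ⟨j, -, hj⟩
    exact absurd hj (Fin.castSucc_lt_last j).ne
  have hcard : (insert (Fin.last m) (T.map Fin.castSuccEmb)).card = T.card + 1 := by
    rw [Finset.card_insert_of_notMem hnot, Finset.card_map]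
  unfold phi Phi
  rw [hcard, Nat.succ_sub_succ]
  congr 1
  rw [Finset.sum_filter, Finset.sum_filter, sum_split]
  refine Finset.sum_congr rfl fun y _ => ?_
  have hcond : ∀ b : Bool, ((∀ i ∈ insert (Fin.last m) (T.map Fin.castSuccEmb),
      (Fin.snoc y b : Fin (m+1) → Bool) i = v i) ↔ (b = true ∧ ∀ j ∈ T, y j = u j)) := by
    intro b
    subst hv
    simp only [Finset.forall_mem_insert, Finset.forall_mem_map, Fin.coe_castSuccEmb,
      Fin.snoc_last, Fin.snoc_castSucc]
  have hκt : κ (Fin.snoc y true) = κ₂ y := by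
    rw [hκ]
    simp [Fin.snoc_last, Fin.snoc_castSucc]
  have hκf : κ (Fin.snoc y false) = κ₁ y := by
    rw [hκ]
    simp [Fin.snoc_last, Fin.snoc_castSucc]
  simp only [hcond true, hcond false]
  simp [hκt, hκf]

include hκ hv in
lemma phi_noinsert (T : Finset (Fin m)) :
    phi κ v (T.map Fin.castSuccEmb)
      = (1 / 2 ^ (m - T.card + 1)) * (Phi κ₂ u T + Phi κ₁ u T) := by
  unfold phi Phi
  rw [Finset.card_map]
  have hTm : T.card ≤ m := by
    have := Finset.card_le_univ T
    simpa using this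
  have hms : m + 1 - T.card = m - T.card + 1 := by omega
  rw [hms]
  congr 1
  rw [Finset.sum_filter, Finset.sum_filter, Finset.sum_filter, sum_split, ← Finset.sum_add_distrib]
  refine Finset.sum_congr rfl fun y _ => ?_
  have hcond : ∀ b : Bool, ((∀ i ∈ T.map Fin.castSuccEmb,
      (Fin.snoc y b : Fin (m+1) → Bool) i = v i) ↔ (∀ j ∈ T, y j = u j)) := by
    intro b
    subst hv
    simp only [Finset.forall_mem_map, Fin.coe_castSuccEmb,
      Fin.snoc_castSucc]
  have hκt : κ (Fin.snoc y true) = κ₂ y := by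
    rw [hκ]; simp [Fin.snoc_last, Fin.snoc_castSucc]
  have hκf : κ (Fin.snoc y false) = κ₁ y := by
    rw [hκ]; simp [Fin.snoc_last, Fin.snoc_castSucc]
  simp only [hcond true, hcond false]
  by_cases h : ∀ j ∈ T, y j = u j <;> simp [h, hκt, hκf]

include hκ hv in
lemma phi_diff (hent : ∀ y, κ₁ y = true → κ₂ y = true) (T : Finset (Fin m)) :
    phi κ v (insert (Fin.last m) (T.map Fin.castSuccEmb)) - phi κ v (T.map Fin.castSuccEmb)
      = (1 / 2 ^ (m - T.card + 1)) * (Phi κ₂ u T - Phi κ₁ u T) := by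
  rw [phi_insert κ₁ κ₂ u κ hκ v hv T, phi_noinsert κ₁ κ₂ u κ hκ v hv T]
  rw [pow_succ]
  ring

lemma Phi_mono (hent : ∀ y, κ₁ y = true → κ₂ y = true) (T : Finset (Fin m)) :
    Phi κ₁ u T ≤ Phi κ₂ u T := by
  refine Finset.sum_le_sum fun y _ => ?_
  by_cases h : κ₁ y
  · simp [h, hent y h]
  · simp only [h, if_false]
    positivity

end main


lemma exists_T {m : ℕ} (S : Finset (Fin (m+1))) (hS : S ⊆ Finset.univ.erase (Fin.last m)) :
    ∃ T : Finset (Fin m), S = T.map Fin.castSuccEmb := by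
  classical
  refine ⟨S.preimage Fin.castSucc (Fin.castSucc_injective m).injOn, ?_⟩
  rw [Finset.map_eq_image, Fin.coe_castSuccEmb, Finset.image_preimage]
  refine (Finset.filter_true_of_mem ?_).symm
  intro i hi
  have hne : i ≠ Fin.last m := (Finset.mem_erase.1 (hS hi)).1
  obtain ⟨j, hj⟩ := Fin.exists_castSucc_eq.2 hne
  exact ⟨j, hj⟩

/-- In the construction `κ(y,xₙ) = if xₙ then κ₂ y else κ₁ y` with `κ₁ ⊨ κ₂`,
`κ₁ ≠ κ₂` both non-constant, `v = (u,1)`, `κ₂ u = false`: for each `S ⊆ {1..m}`,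
`φ(S∪{n}) − φ(S) = 2^{-(m-|S|)-1}(Σ κ₂ − Σ κ₁)` over points agreeing with `u` on
`S`, which is nonnegative; hence `Sv(n) ≥ 0`, and `Sv(n) > 0` when `κ₁ ≠ κ₂`. -/
theorem stmt10 (m : ℕ) (κ₁ κ₂ : (Fin m → Bool) → Bool)
    (h1 : ∃ a b, κ₁ a ≠ κ₁ b) (h2 : ∃ a b, κ₂ a ≠ κ₂ b)
    (hent : ∀ y, κ₁ y = true → κ₂ y = true)
    (u : Fin m → Bool) (hu2 : κ₂ u = false)
    (κ : (Fin (m + 1) → Bool) → Bool)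
    (hκ : ∀ x, κ x = if x (Fin.last m) then κ₂ (fun i => x i.castSucc)
                     else κ₁ (fun i => x i.castSucc))
    (v : Fin (m + 1) → Bool) (hv : v = Fin.snoc u true) :
    (∀ T : Finset (Fin m),
      (phi κ v (insert (Fin.last m) (T.map Fin.castSuccEmb))
          - phi κ v (T.map Fin.castSuccEmb)
        = (1 / 2 ^ (m - T.card + 1)) *
            ((∑ y ∈ Finset.univ.filter (fun y : Fin m → Bool => ∀ i ∈ T, y i = u i),
                (if κ₂ y then (1 : ℝ) else 0))
             - ∑ y ∈ Finset.univ.filter (fun y : Fin m → Bool => ∀ i ∈ T, y i = u i),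
                (if κ₁ y then (1 : ℝ) else 0))) ∧
      0 ≤ phi κ v (insert (Fin.last m) (T.map Fin.castSuccEmb))
          - phi κ v (T.map Fin.castSuccEmb)) ∧
    0 ≤ Sv κ v (Fin.last m) ∧
    (κ₁ ≠ κ₂ → 0 < Sv κ v (Fin.last m)) := by
  classical
  have key : ∀ T : Finset (Fin m),
      phi κ v (insert (Fin.last m) (T.map Fin.castSuccEmb)) - phi κ v (T.map Fin.castSuccEmb)
        = (1 / 2 ^ (m - T.card + 1)) * (Phi κ₂ u T - Phi κ₁ u T) :=
    phi_diff κ₁ κ₂ u κ hκ v hv hent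
  have hmono := Phi_mono κ₁ κ₂ u hent
  have hnn : ∀ T : Finset (Fin m),
      0 ≤ phi κ v (insert (Fin.last m) (T.map Fin.castSuccEmb))
        - phi κ v (T.map Fin.castSuccEmb) := by
    intro T
    rw [key T]
    have := hmono T
    have h2 : (0:ℝ) ≤ 1 / 2 ^ (m - T.card + 1) := by positivity
    nlinarith
  have hterm_nn : ∀ S ∈ (Finset.univ.erase (Fin.last m)).powerset,
      0 ≤ ((S.card.factorial * ((m+1) - S.card - 1).factorial : ℝ) / (m+1).factorial) *
        (phi κ v (insert (Fin.last m) S) - phi κ v S) := by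
    intro S hS
    obtain ⟨T, rfl⟩ := exists_T S (Finset.mem_powerset.1 hS)
    apply mul_nonneg
    · positivity
    · exact hnn T
  refine ⟨fun T => ⟨key T, hnn T⟩, ?_, ?_⟩
  · exact Finset.sum_nonneg hterm_nn
  · intro hne
    apply Finset.sum_pos' hterm_nn
    refine ⟨∅, Finset.mem_powerset.2 (Finset.empty_subset _), ?_⟩
    apply mul_pos
    · positivity
    · have h0 : (∅ : Finset (Fin (m+1))) = (∅ : Finset (Fin m)).map Fin.castSuccEmb := by
        simp
      rw [h0, key ∅]
      apply mul_pos
      · positivity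
      · obtain ⟨y₀, hy₀⟩ := Function.ne_iff.1 hne
        have hk1 : κ₁ y₀ = false := by
          cases h : κ₁ y₀
          · rfl
          · exact absurd (h.trans (hent y₀ h).symm) hy₀
        have hk2 : κ₂ y₀ = true := by
          cases h : κ₂ y₀
          · exact absurd (hk1.trans h.symm) hy₀
          · rfl
        have hP : ∀ g : (Fin m → Bool) → Bool, Phi g u ∅
            = ∑ y : Fin m → Bool, (if g y then (1:ℝ) else 0) := by
          intro g
          unfold Phi
          simp
        rw [sub_pos, hP, hP]
        apply Finset.sum_lt_sum
        · intro y _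
          by_cases h : κ₁ y
          · simp [h, hent y h]
          · simp only [h, if_false]
            positivity
        · exact ⟨y₀, Finset.mem_univ _, by simp [hk1, hk2]⟩
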